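/- Let p = softmax(z) over m outputs, y ∈ {0,1}^m a label vector, and m, n two indices with y_m = y_n = 1. After one gradient descent step on the logits with learning rate λ > 0 applied to the NLL loss L = -log(Σ_i y_i p_i), the new probabilities satisfy p'_m / p'_n = (p_m/p_n)·exp(λ(p_m - p_n)(1-p̂)/p̂), where p̂ = Σ_i y_i p_i. In particular, p'_m/p'_n > p_m/p_n if and only if p_m > p_n, and p'_m/p'_n = p_m/p_n if p_m = p_n. -/
import Mathlib


noncomputable def softmax {m : ℕ} (z : Fin m → ℝ) (i : Fin m) : ℝ :=
  Real.exp (z i) / ∑ k, Real.exp (z k)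

lemma softmax_ratio {m : ℕ} (z : Fin m → ℝ) (i j : Fin m) :
    softmax z i / softmax z j = Real.exp (z i - z j) := by
  have hd : 0 < ∑ k, Real.exp (z k) :=
    Finset.sum_pos (fun k _ => Real.exp_pos _) ⟨i, Finset.mem_univ i⟩
  simp only [softmax]
  rw [Real.exp_sub]
  field_simp

/-- one gradient step on the NLL loss multiplies the ratio of two allowed
probabilities by `exp (λ (p_m - p_n)(1-p̂)/p̂)`; hence the ratio increases iff
`p_m > p_n` and is preserved when `p_m = p_n`. -/
theorem nll_ratio_update {m' : ℕ} (z : Fin m' → ℝ) (y : Fin m' → ℝ)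
    (hy : ∀ i, y i = 0 ∨ y i = 1)
    (lam : ℝ) (hlam : 0 < lam)
    (p : Fin m' → ℝ) (hp : p = softmax z)
    (phat : ℝ) (hphat : phat = ∑ i, y i * p i)
    (h0 : 0 < phat) (h1 : phat < 1)
    (grad : Fin m' → ℝ) (hgrad : ∀ j, grad j = (p j / phat) * (phat - y j))
    (z' : Fin m' → ℝ) (hz' : ∀ j, z' j = z j - lam * grad j)
    (p' : Fin m' → ℝ) (hp' : p' = softmax z')
    (a b : Fin m') (ha : y a = 1) (hb : y b = 1) :
    p' a / p' b = (p a / p b) * Real.exp (lam * (p a - p b) * (1 - phat) / phat) ∧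
    (p a / p b < p' a / p' b ↔ p b < p a) ∧
    (p a = p b → p' a / p' b = p a / p b) := by
  have hpr : p a / p b = Real.exp (z a - z b) := by rw [hp]; exact softmax_ratio z a b
  have hz'ab : z' a - z' b = (z a - z b) + lam * (p a - p b) * (1 - phat) / phat := by
    rw [hz' a, hz' b, hgrad a, hgrad b, ha, hb]
    field_simp
    ring
  have hpr' : p' a / p' b
      = Real.exp (z a - z b) * Real.exp (lam * (p a - p b) * (1 - phat) / phat) := by
    rw [hp', softmax_ratio z' a b, hz'ab, Real.exp_add]
  have key : p' a / p' b = (p a / p b) * Real.exp (lam * (p a - p b) * (1 - phat) / phat) := by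
    rw [hpr', hpr]
  refine ⟨key, ?_, ?_⟩
  · rw [hpr', hpr, ← Real.exp_add, Real.exp_lt_exp]
    constructor
    · intro h
      have hq : 0 < lam * (p a - p b) * (1 - phat) / phat := by linarith
      have h2 : 0 < lam * (p a - p b) * (1 - phat) := by
        by_contra hc
        push_neg at hc
        have := div_nonpos_of_nonpos_of_nonneg hc h0.le
        linarith
      by_contra hba
      push_neg at hba
      nlinarith [mul_nonneg (mul_nonneg hlam.le (sub_nonneg.mpr hba)) (by linarith : (0:ℝ) ≤ 1 - phat)]
    · intro h
      have hq : 0 < lam * (p a - p b) * (1 - phat) / phat :=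
        div_pos (mul_pos (mul_pos hlam (sub_pos.mpr h)) (by linarith)) h0
      linarith
  · intro h
    rw [key, h]
    simp
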